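/- (Reachability of π*.) For every deterministic initial policy π₀ there exists n(π₀) ∈ ℕ such that K^{n(π₀)}(π₀, π*) > 0: the optimistic-policy-iteration chain on policies reaches the optimal policy π* from π₀ with positive probability in finitely many steps. -/

import Mathlib

/-!
STATEMENT 9 (Reachability of π*): for every deterministic initial policy π₀
there exists n(π₀) ∈ ℕ such that K^{n(π₀)}(π₀, π*) > 0: the
optimistic-policy-iteration chain on policies reaches the optimal policy π*
from π₀ with positive probability in finitely many steps.
-/

open MeasureTheory

/-- The greedy policy for an action-value function `Q`, with the fixed consistent
tie-breaking rule given by a linear order on actions (least maximizer). -/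
noncomputable def greedySel {S A : Type*} [Fintype A] [Nonempty A] [LinearOrder A]
    (Q : S → A → ℝ) (s : S) : A := by
  classical
  exact (Finset.univ.filter fun a => ∀ a', Q s a' ≤ Q s a).min' (by
    obtain ⟨a, -, ha⟩ := Finset.exists_max_image Finset.univ (fun a => Q s a)
      ⟨Classical.arbitrary A, Finset.mem_univ _⟩
    exact ⟨a, Finset.mem_filter.mpr
      ⟨Finset.mem_univ _, fun a' => ha a' (Finset.mem_univ _)⟩⟩)

/-- The optimistic-policy-iteration kernel on deterministic policies:
`K π π'` is the probability that `π'` is the greedy policy for the (mutually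
independent) sampled returns `G^π`. -/
noncomputable def opiKernel {S A : Type*} [Fintype S] [Fintype A] [Nonempty A] [LinearOrder A]
    (ret : (S → A) → S → A → Measure ℝ) (π π' : S → A) : ENNReal :=
  (Measure.pi fun s => Measure.pi fun a => ret π s a) {g : S → A → ℝ | greedySel g = π'}

/-- The n-step iterate Kⁿ of the optimistic-policy-iteration policy kernel. -/
noncomputable def opiKernelIter {S A : Type*} [Fintype S] [DecidableEq S]
    [Fintype A] [Nonempty A] [LinearOrder A]
    (ret : (S → A) → S → A → Measure ℝ) : ℕ → (S → A) → (S → A) → ENNReal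
  | 0, π, π' => if π = π' then 1 else 0
  | n + 1, π, π' => ∑ π'' : S → A, opiKernel ret π π'' * opiKernelIter ret n π'' π'

lemma greedySel_le {S A : Type*} [Fintype A] [Nonempty A] [LinearOrder A]
    (Q : S → A → ℝ) (s : S) (a : A) : Q s a ≤ Q s (greedySel Q s) := by
  classical
  have h := Finset.min'_mem (Finset.univ.filter fun a => ∀ a', Q s a' ≤ Q s a)
    (by
      obtain ⟨b, -, hb⟩ := Finset.exists_max_image Finset.univ (fun a => Q s a)
        ⟨Classical.arbitrary A, Finset.mem_univ _⟩
      exact ⟨b, Finset.mem_filter.mpr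
        ⟨Finset.mem_univ _, fun a' => hb a' (Finset.mem_univ _)⟩⟩)
  rw [Finset.mem_filter] at h
  exact h.2 a

lemma greedySel_min {S A : Type*} [Fintype A] [Nonempty A] [LinearOrder A]
    (Q : S → A → ℝ) (s : S) {a : A} (h : ∀ a', Q s a' ≤ Q s a) : greedySel Q s ≤ a := by
  classical
  exact Finset.min'_le _ _ (Finset.mem_filter.mpr ⟨Finset.mem_univ _, h⟩)

lemma greedySel_lt {S A : Type*} [Fintype A] [Nonempty A] [LinearOrder A]
    (Q : S → A → ℝ) (s : S) {a : A} (h : a < greedySel Q s) :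
    Q s a < Q s (greedySel Q s) :=
  lt_of_le_of_ne (greedySel_le Q s a) fun heq => absurd (greedySel_min Q s
    fun a' => heq ▸ greedySel_le Q s a') (not_le.mpr h)

lemma greedySel_eq {S A : Type*} [Fintype A] [Nonempty A] [LinearOrder A]
    (Q : S → A → ℝ) (s : S) {b : A} (hmax : ∀ a, Q s a ≤ Q s b)
    (hstrict : ∀ a, a < b → Q s a < Q s b) : greedySel Q s = b := by
  rcases lt_or_eq_of_le (greedySel_min Q s hmax) with h | h
  · exact absurd (greedySel_le Q s b) (not_le.mpr (hstrict _ h))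
  · exact h


lemma sub_opt {S A : Type*} [Fintype S] [Nonempty S] [Fintype A] [Nonempty A]
    (γ : ℝ) (hγ0 : 0 ≤ γ) (hγ1 : γ < 1)
    (P : S → A → S → ℝ) (hPnn : ∀ s a s', 0 ≤ P s a s') (hProw : ∀ s a, ∑ s', P s a s' = 1)
    (rbar : S → A → ℝ) (Qpi : (S → A) → S → A → ℝ)
    (hbell : ∀ π s a, Qpi π s a = rbar s a + γ * ∑ s', P s a s' * Qpi π s' (π s'))
    (α β σ : S → A)
    (h1 : ∀ s, Qpi α s (α s) ≤ Qpi α s (σ s))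
    (h2 : ∀ s, Qpi β s (σ s) ≤ Qpi β s (β s)) :
    ∀ s a, Qpi α s a ≤ Qpi β s a := by
  classical
  set M := Finset.univ.sup' Finset.univ_nonempty
    (fun p : S × A => Qpi α p.1 p.2 - Qpi β p.1 p.2) with hM
  have key : ∀ s a, Qpi α s a - Qpi β s a ≤ γ * M := by
    intro s a
    have hdiff : Qpi α s a - Qpi β s a
        = γ * ∑ s', P s a s' * (Qpi α s' (α s') - Qpi β s' (β s')) := by
      rw [hbell α s a, hbell β s a]
      rw [Finset.mul_sum, Finset.mul_sum, Finset.mul_sum]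
      have : ∑ s', γ * (P s a s' * (Qpi α s' (α s') - Qpi β s' (β s')))
          = (∑ s', γ * (P s a s' * Qpi α s' (α s')))
            - ∑ s', γ * (P s a s' * Qpi β s' (β s')) := by
        rw [← Finset.sum_sub_distrib]
        exact Finset.sum_congr rfl fun s' _ => by ring
      rw [this]
      ring
    rw [hdiff]
    have hsum : ∑ s', P s a s' * (Qpi α s' (α s') - Qpi β s' (β s')) ≤ M := by
      calc ∑ s', P s a s' * (Qpi α s' (α s') - Qpi β s' (β s'))
          ≤ ∑ s', P s a s' * M := by
            apply Finset.sum_le_sum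
            intro s' _
            apply mul_le_mul_of_nonneg_left _ (hPnn s a s')
            calc Qpi α s' (α s') - Qpi β s' (β s')
                ≤ Qpi α s' (σ s') - Qpi β s' (σ s') := by
                  have := h1 s'; have := h2 s'; linarith
              _ ≤ M := Finset.le_sup' (f := fun p : S × A => Qpi α p.1 p.2 - Qpi β p.1 p.2)
                  (Finset.mem_univ (s', σ s'))
        _ = M := by rw [← Finset.sum_mul, hProw, one_mul]
    exact mul_le_mul_of_nonneg_left hsum hγ0
  have hMle : M ≤ γ * M := by
    apply Finset.sup'_le
    intro p _
    exact key p.1 p.2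
  have hM0 : M ≤ 0 := by nlinarith
  intro s a
  have := Finset.le_sup' (f := fun p : S × A => Qpi α p.1 p.2 - Qpi β p.1 p.2)
    (Finset.mem_univ (s, a))
  simp only at this
  linarith [le_trans this hM0]

lemma integrable_id_of_supp (μ : Measure ℝ) [IsProbabilityMeasure μ] {M : ℝ}
    (hsupp : μ (Set.Icc 0 M)ᶜ = 0) : Integrable (fun x : ℝ => x) μ := by
  have hb : ∀ᵐ x ∂μ, x ∈ Set.Icc 0 M := by
    rw [Filter.eventually_iff, mem_ae_iff, Set.setOf_mem_eq]
    exact hsupp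
  refine ⟨measurable_id.aestronglyMeasurable, ?_⟩
  apply HasFiniteIntegral.of_bounded (C := |M|)
  filter_upwards [hb] with x hx
  rw [Real.norm_eq_abs, abs_le]
  constructor
  · linarith [hx.1, hx.2, abs_nonneg M]
  · exact hx.2.trans (le_abs_self M)

lemma meas_Ici_pos (μ : Measure ℝ) [IsProbabilityMeasure μ] {M m : ℝ}
    (hsupp : μ (Set.Icc 0 M)ᶜ = 0) (hm : (∫ x, x ∂μ) = m) : 0 < μ (Set.Ici m) := by
  by_contra h
  push_neg at h
  have h0 : μ (Set.Ici m) = 0 := le_antisymm h zero_le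
  have hlt : ∀ᵐ x ∂μ, x < m := by
    rw [Filter.eventually_iff, mem_ae_iff]
    rw [show {x : ℝ | x < m} = Set.Iio m from rfl, Set.compl_Iio]
    exact h0
  have hint : Integrable (fun x : ℝ => x) μ := integrable_id_of_supp μ hsupp
  have hfint : Integrable (fun x : ℝ => m - x) μ := (integrable_const m).sub hint
  have hpos : 0 ≤ᵐ[μ] fun x : ℝ => m - x := by
    filter_upwards [hlt] with x hx
    show (0:ℝ) ≤ _
    linarith
  have hiz : (∫ x, (m - x) ∂μ) = 0 := by
    rw [integral_sub (integrable_const m) hint, hm, integral_const]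
    simp
  have hsupport : 0 < μ (Function.support fun x : ℝ => m - x) := by
    have hsub : Set.Iio m ⊆ Function.support fun x : ℝ => m - x := by
      intro x hx
      simp only [Function.mem_support]
      intro hc
      simp only [Set.mem_Iio] at hx
      linarith
    have : μ (Set.Iio m) = 1 := by
      have := measure_compl (μ := μ) (measurableSet_Ici (a := m)) (measure_ne_top μ _)
      rw [h0] at this
      simpa using this
    calc (0 : ENNReal) < 1 := by norm_num
      _ = μ (Set.Iio m) := this.symm
      _ ≤ _ := measure_mono hsub
  have := (integral_pos_iff_support_of_nonneg_ae hpos hfint).mpr hsupport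
  rw [hiz] at this
  exact lt_irrefl 0 this

lemma meas_Iic_pos (μ : Measure ℝ) [IsProbabilityMeasure μ] {M m : ℝ}
    (hsupp : μ (Set.Icc 0 M)ᶜ = 0) (hm : (∫ x, x ∂μ) = m) : 0 < μ (Set.Iic m) := by
  by_contra h
  push_neg at h
  have h0 : μ (Set.Iic m) = 0 := le_antisymm h zero_le
  have hlt : ∀ᵐ x ∂μ, m < x := by
    rw [Filter.eventually_iff, mem_ae_iff]
    have : {x : ℝ | m < x}ᶜ = Set.Iic m := by ext x; simp [not_lt]
    rw [this]; exact h0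
  have hint : Integrable (fun x : ℝ => x) μ := integrable_id_of_supp μ hsupp
  have hfint : Integrable (fun x : ℝ => x - m) μ := hint.sub (integrable_const m)
  have hpos : 0 ≤ᵐ[μ] fun x : ℝ => x - m := by
    filter_upwards [hlt] with x hx
    show (0:ℝ) ≤ _
    linarith
  have hiz : (∫ x, (x - m) ∂μ) = 0 := by
    rw [integral_sub hint (integrable_const m), hm, integral_const]
    simp
  have hsupport : 0 < μ (Function.support fun x : ℝ => x - m) := by
    have hsub : Set.Ioi m ⊆ Function.support fun x : ℝ => x - m := by
      intro x hx
      simp only [Function.mem_support]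
      intro hc
      simp only [Set.mem_Ioi] at hx
      linarith
    have : μ (Set.Ioi m) = 1 := by
      have := measure_compl (μ := μ) (measurableSet_Iic (a := m)) (measure_ne_top μ _)
      rw [h0] at this
      simpa [Set.compl_Iic] using this
    calc (0 : ENNReal) < 1 := by norm_num
      _ = μ (Set.Ioi m) := this.symm
      _ ≤ _ := measure_mono hsub
  have := (integral_pos_iff_support_of_nonneg_ae hpos hfint).mpr hsupport
  rw [hiz] at this
  exact lt_irrefl 0 this


lemma opiKernel_greedy_pos {S A : Type*} [Fintype S] [Fintype A] [Nonempty A] [LinearOrder A]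
    {M : ℝ} (Q : S → A → ℝ)
    (ret : (S → A) → S → A → Measure ℝ)
    (hret : ∀ π s a, IsProbabilityMeasure (ret π s a))
    (hsupp : ∀ π s a, (ret π s a) (Set.Icc 0 M)ᶜ = 0)
    (π : S → A)
    (hmean : ∀ s a, (∫ x, x ∂ret π s a) = Q s a) :
    0 < opiKernel ret π (greedySel Q) := by
  classical
  haveI : ∀ s a, IsProbabilityMeasure (ret π s a) := hret π
  set I : S → A → Set ℝ := fun s a =>
    if a = greedySel Q s then Set.Ici (Q s a) else Set.Iic (Q s a) with hI
  have hsub : (Set.univ.pi fun s => Set.univ.pi fun a => I s a)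
      ⊆ {g : S → A → ℝ | greedySel g = greedySel Q} := by
    intro g hg
    have hmem : ∀ s a, g s a ∈ I s a := fun s a =>
      hg s (Set.mem_univ s) a (Set.mem_univ a)
    have hstar : ∀ s, Q s (greedySel Q s) ≤ g s (greedySel Q s) := by
      intro s
      have := hmem s (greedySel Q s)
      rw [hI] at this
      simpa using this
    have hother : ∀ s a, a ≠ greedySel Q s → g s a ≤ Q s a := by
      intro s a ha
      have := hmem s a
      rw [hI] at this
      simp only [if_neg ha] at this
      exact this
    show greedySel g = greedySel Q
    funext s
    apply greedySel_eq
    · intro a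
      by_cases ha : a = greedySel Q s
      · rw [ha]
      · exact le_trans (hother s a ha)
          (le_trans (greedySel_le Q s a) (hstar s))
    · intro a ha
      have hane : a ≠ greedySel Q s := ne_of_lt ha
      calc g s a ≤ Q s a := hother s a hane
        _ < Q s (greedySel Q s) := greedySel_lt Q s ha
        _ ≤ g s (greedySel Q s) := hstar s
  have hprod : (Measure.pi fun s => Measure.pi fun a => ret π s a)
      (Set.univ.pi fun s => Set.univ.pi fun a => I s a)
      = ∏ s, ∏ a, ret π s a (I s a) := by
    rw [Measure.pi_pi]
    exact Finset.prod_congr rfl fun s _ => Measure.pi_pi _ _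
  have hpos : 0 < ∏ s : S, ∏ a : A, ret π s a (I s a) := by
    rw [CanonicallyOrderedAdd.prod_pos]
    intro s _
    rw [CanonicallyOrderedAdd.prod_pos]
    intro a _
    by_cases ha : a = greedySel Q s
    · simp only [hI, if_pos ha]
      exact meas_Ici_pos (ret π s a) (hsupp π s a) (hmean s a)
    · simp only [hI, if_neg ha]
      exact meas_Iic_pos (ret π s a) (hsupp π s a) (hmean s a)
  calc (0:ENNReal) < ∏ s : S, ∏ a : A, ret π s a (I s a) := hpos
    _ = _ := hprod.symm
    _ ≤ opiKernel ret π (greedySel Q) := measure_mono hsub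

theorem optimal_policy_reachable
    {S A : Type*} [Fintype S] [DecidableEq S] [Nonempty S]
    [Fintype A] [Nonempty A] [LinearOrder A]
    (γ Rmax : ℝ) (hγ0 : 0 ≤ γ) (hγ1 : γ < 1) (hRmax : 0 ≤ Rmax)
    -- transition probabilities and mean rewards of the finite MDP
    (P : S → A → S → ℝ) (hPnn : ∀ s a s', 0 ≤ P s a s') (hProw : ∀ s a, ∑ s', P s a s' = 1)
    (rbar : S → A → ℝ) (hrbar : ∀ s a, rbar s a ∈ Set.Icc 0 Rmax)
    -- the action-value functions Q^π, satisfying the Bellman equations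
    (Qpi : (S → A) → S → A → ℝ)
    (hbell : ∀ π s a, Qpi π s a = rbar s a + γ * ∑ s', P s a s' * Qpi π s' (π s'))
    -- the return distributions G^π(s,a): mean Q^π(s,a), bounded support
    (ret : (S → A) → S → A → Measure ℝ)
    (hret : ∀ π s a, IsProbabilityMeasure (ret π s a))
    (hsupp : ∀ π s a, (ret π s a) (Set.Icc 0 (Rmax / (1 - γ)))ᶜ = 0)
    (hmean : ∀ π s a, (∫ x, x ∂ret π s a) = Qpi π s a)
    -- the optimal policy π*
    (πstar : S → A)
    (hopt : ∀ π s a, Qpi π s a ≤ Qpi πstar s a)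
    (hgreedystar : greedySel (Qpi πstar) = πstar)
    -- an arbitrary initial policy
    (π₀ : S → A) :
    ∃ n : ℕ, 0 < opiKernelIter ret n π₀ πstar := by
  classical
  have hgapp : ∀ π : S → A, greedySel (Qpi π) = greedySel (Qpi π) := fun _ => rfl
  set g : (S → A) → (S → A) := fun π => greedySel (Qpi π) with hg
  have hgdef : ∀ π : S → A, g π = greedySel (Qpi π) := fun _ => rfl
  -- policy improvement
  have himp : ∀ π s a, Qpi π s a ≤ Qpi (g π) s a := by
    intro π
    apply sub_opt γ hγ0 hγ1 P hPnn hProw rbar Qpi hbell π (g π) (g π)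
    · intro s
      rw [hgdef]
      exact greedySel_le (Qpi π) s (π s)
    · intro s
      exact le_refl _
  have hmono : ∀ k m, k ≤ m → ∀ s a, Qpi (g^[k] π₀) s a ≤ Qpi (g^[m] π₀) s a := by
    intro k m hkm
    induction m, hkm using Nat.le_induction with
    | base => intro s a; exact le_refl _
    | succ n hn ih =>
      intro s a
      rw [Function.iterate_succ_apply']
      exact le_trans (ih s a) (himp _ s a)
  -- a greedy fixed point is reached, and it is πstar
  have key : ∀ i j, i < j → g^[i] π₀ = g^[j] π₀ → g^[i+1] π₀ = πstar := by
    intro i j hij hije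
    have hQ1 := hmono i (i+1) (Nat.le_succ i)
    have hQ2 : ∀ s a, Qpi (g^[i+1] π₀) s a ≤ Qpi (g^[i] π₀) s a := by
      intro s a
      have := hmono (i+1) j hij s a
      rwa [← hije] at this
    have hQeq : Qpi (g^[i+1] π₀) = Qpi (g^[i] π₀) :=
      funext fun s => funext fun a => le_antisymm (hQ2 s a) (hQ1 s a)
    set π₁ := g^[i+1] π₀ with hπ₁
    have hfix : greedySel (Qpi π₁) = π₁ := by
      calc greedySel (Qpi π₁) = greedySel (Qpi (g^[i] π₀)) := by rw [hQeq]
        _ = g (g^[i] π₀) := (hgdef _).symm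
        _ = π₁ := (Function.iterate_succ_apply' g i π₀).symm
    have hge : ∀ s a, Qpi πstar s a ≤ Qpi π₁ s a := by
      apply sub_opt γ hγ0 hγ1 P hPnn hProw rbar Qpi hbell πstar π₁ πstar
      · intro s; exact le_refl _
      · intro s
        have := greedySel_le (Qpi π₁) s (πstar s)
        rwa [hfix] at this
    have hQstar : Qpi π₁ = Qpi πstar :=
      funext fun s => funext fun a => le_antisymm (hopt π₁ s a) (hge s a)
    calc π₁ = greedySel (Qpi π₁) := hfix.symm
      _ = greedySel (Qpi πstar) := by rw [hQstar]
      _ = πstar := hgreedystar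
  have hreach : ∃ N, g^[N] π₀ = πstar := by
    obtain ⟨i, j, hne, heq⟩ :=
      Finite.exists_ne_map_eq_of_infinite (fun n : ℕ => g^[n] π₀)
    rcases lt_or_gt_of_ne hne with h | h
    · exact ⟨i + 1, key i j h heq⟩
    · exact ⟨j + 1, key j i h heq.symm⟩
  -- the kernel iterates have positive mass along the greedy path
  have hiterpos : ∀ n (π : S → A), g^[n] π = πstar → 0 < opiKernelIter ret n π πstar := by
    intro n
    induction n with
    | zero =>
      intro π h
      simp only [Function.iterate_zero, id_eq] at h
      simp [opiKernelIter, h]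
    | succ n ih =>
      intro π h
      have h' : g^[n] (g π) = πstar := by
        rw [← Function.iterate_succ_apply]
        exact h
      have t1 : 0 < opiKernel ret π (g π) := by
        rw [hgdef]
        exact opiKernel_greedy_pos (Qpi π) ret hret hsupp π (hmean π)
      have t2 := ih (g π) h'
      calc (0:ENNReal) < opiKernel ret π (g π) * opiKernelIter ret n (g π) πstar :=
          ENNReal.mul_pos t1.ne' t2.ne'
        _ ≤ ∑ π'' : S → A, opiKernel ret π π'' * opiKernelIter ret n π'' πstar :=
          Finset.single_le_sum (f := fun π'' => opiKernel ret π π'' * opiKernelIter ret n π'' πstar)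
            (fun _ _ => zero_le) (Finset.mem_univ (g π))
        _ = opiKernelIter ret (n+1) π πstar := rfl
  obtain ⟨N, hN⟩ := hreach
  exact ⟨N, hiterpos N π₀ hN⟩
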